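/- For every M > 0 there exist μ > 0 and C > 0 such that the following holds. Let c₃, γ ∈ ℝ with |c₃| + |γ| ≤ μ, and let U solve the profile ODE with parameters (c₃, γ) and satisfy sup_{y ∈ (−1,1)} |U(y)| ≤ M(|c₃| + |γ|). Then for all y ∈ (−1,1), |U(y) + (c₃/2) sgn(y) (1−y²) ln(1−y²)| ≤ C (|c₃| + |γ|) (1−y²). -/

import Mathlib

open Set


def SolvesProfileODE (c₃ γ : ℝ) (U : ℝ → ℝ) : Prop :=
  ContinuousOn U (Icc (-1) 1) ∧
  ContDiffOn ℝ 2 U (Ioo (-1) 1) ∧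
  (∀ y ∈ Ioo (-1 : ℝ) 1,
    (1 - y ^ 2) * deriv U y + 2 * y * U y + (1 / 2) * (U y) ^ 2 = c₃ * (1 - y ^ 2)) ∧
  U 0 = γ

noncomputable def Faux (c₃ : ℝ) (U : ℝ → ℝ) (s : ℝ) : ℝ :=
  U s / (1 - s^2) + c₃/2 * Real.log (1 - s^2)

lemma logsq_hasDeriv {t : ℝ} (ht : t < 1) :
    HasDerivAt (fun s => 2 - (1 - s) * ((Real.log (1 - s))^2 - 2 * Real.log (1 - s) + 2))
      ((Real.log (1 - t))^2) t := by
  have h0 : (1 : ℝ) - t ≠ 0 := by linarith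
  have h2 : HasDerivAt (fun s : ℝ => 1 - s) (-1) t := by
    simpa using (hasDerivAt_id' t).const_sub (1:ℝ)
  have hL : HasDerivAt (fun s : ℝ => Real.log (1 - s)) (-(1/(1-t))) t := by
    simpa [div_eq_mul_inv, mul_comm] using h2.log h0
  have hh : HasDerivAt (fun s => (Real.log (1 - s))^2 - 2 * Real.log (1 - s) + 2)
      (2 * Real.log (1-t) * (-(1/(1-t))) - 2 * (-(1/(1-t)))) t := by
    have := ((hL.pow 2).sub ((hasDerivAt_const t (2:ℝ)).mul hL)).add_const 2
    refine this.congr_deriv ?_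
    ring
  have := (hasDerivAt_const t (2:ℝ)).sub (h2.mul hh)
  refine this.congr_deriv ?_
  field_simp
  ring

lemma logsq_intInt {y : ℝ} (hy : y ∈ Ico (0:ℝ) 1) :
    IntervalIntegrable (fun t => (Real.log (1 - t))^2) MeasureTheory.volume 0 y := by
  apply ContinuousOn.intervalIntegrable
  apply ContinuousOn.pow
  apply Real.continuousOn_log.comp (by fun_prop)
  intro t ht
  rw [uIcc_of_le hy.1] at ht
  simp only [mem_compl_iff, mem_singleton_iff]
  intro h; rw [sub_eq_zero] at h
  have := lt_of_le_of_lt ht.2 hy.2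
  linarith

lemma logsq_integral_le {y : ℝ} (hy : y ∈ Ico (0:ℝ) 1) :
    ∫ t in (0:ℝ)..y, (Real.log (1 - t))^2 ≤ 2 := by
  obtain ⟨hy0, hy1⟩ := hy
  have heq : ∫ t in (0:ℝ)..y, (Real.log (1 - t))^2
      = (2 - (1 - y) * ((Real.log (1 - y))^2 - 2 * Real.log (1 - y) + 2))
        - (2 - (1 - 0) * ((Real.log (1 - 0))^2 - 2 * Real.log (1 - 0) + 2)) := by
    apply intervalIntegral.integral_eq_sub_of_hasDerivAt _ (logsq_intInt ⟨hy0, hy1⟩)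
    intro t ht
    rw [uIcc_of_le hy0] at ht
    exact logsq_hasDeriv (lt_of_le_of_lt ht.2 hy1)
  rw [heq]
  have hlog : Real.log (1 - y) ≤ 0 := Real.log_nonpos (by linarith) (by linarith)
  have h1 : (0:ℝ) ≤ (1 - y) * ((Real.log (1 - y))^2 - 2 * Real.log (1 - y) + 2) := by
    apply mul_nonneg (by linarith)
    nlinarith [sq_nonneg (Real.log (1 - y))]
  simp [Real.log_one]
  linarith

lemma F_hasDeriv {c₃ γ : ℝ} {U : ℝ → ℝ} (hU : SolvesProfileODE c₃ γ U)
    {t : ℝ} (ht : t ∈ Ioo (-1:ℝ) 1) :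
    HasDerivAt (Faux c₃ U) (c₃ / (1 + t) - (U t / (1 - t^2))^2 / 2) t := by
  obtain ⟨ht1, ht2⟩ := ht
  have h0 : (1:ℝ) - t^2 ≠ 0 := by nlinarith
  have hU' : HasDerivAt U (deriv U t) t := by
    have hd : DifferentiableAt ℝ U t :=
      (hU.2.1.differentiableOn (by norm_num)).differentiableAt
        (isOpen_Ioo.mem_nhds ⟨ht1, ht2⟩)
    exact hd.hasDerivAt
  have hv : HasDerivAt (fun s : ℝ => 1 - s^2) (-(2*t)) t := by
    simpa using ((hasDerivAt_id' t).pow 2).const_sub (1:ℝ)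
  have hdiv : HasDerivAt (fun s => U s / (1 - s^2))
      ((deriv U t * (1 - t^2) - U t * (-(2*t))) / (1 - t^2)^2) t := hU'.div hv h0
  have hlog : HasDerivAt (fun s : ℝ => c₃/2 * Real.log (1 - s^2))
      (c₃/2 * ((-(2*t)) / (1 - t^2))) t := by
    have := hv.log h0
    simpa [div_eq_mul_inv, mul_comm] using this.const_mul (c₃/2)
  have heq := hU.2.2.1 t ⟨ht1, ht2⟩
  have := hdiv.add hlog
  refine this.congr_deriv ?_
  have hnum : deriv U t * (1 - t^2) - U t * (-(2*t))
      = c₃ * (1 - t^2) - (1/2) * (U t)^2 := by linarith [heq]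
  rw [hnum]
  have h1 : (1:ℝ) + t ≠ 0 := by nlinarith
  have h2 : (1:ℝ) - t ≠ 0 := by nlinarith
  field_simp
  ring

set_option maxHeartbeats 1600000 in
lemma improvement {c₃ γ : ℝ} {U : ℝ → ℝ} (hU : SolvesProfileODE c₃ γ U)
    (hμ : |c₃| + |γ| ≤ 1/19) {y : ℝ} (hy : y ∈ Ico (0:ℝ) 1)
    (hb : ∀ t ∈ Icc (0:ℝ) y, |Faux c₃ U t| ≤ 3 * (|c₃| + |γ|)) :
    |Faux c₃ U y| ≤ 5/2 * (|c₃| + |γ|) := by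
  set ε := |c₃| + |γ| with hεdef
  have hε0 : 0 ≤ ε := by positivity
  have hc3 : |c₃| ≤ ε := le_add_of_nonneg_right (abs_nonneg γ)
  have hγ : |γ| ≤ ε := le_add_of_nonneg_left (abs_nonneg c₃)
  have hsub : Icc (0:ℝ) y ⊆ Ioo (-1) 1 :=
    fun t ht => ⟨by linarith [ht.1], lt_of_le_of_lt ht.2 hy.2⟩
  set f : ℝ → ℝ := fun t => c₃ / (1 + t) - (U t / (1 - t^2))^2 / 2 with hfdef
  have hfc : ContinuousOn f (Icc 0 y) := by
    have hUc : ContinuousOn U (Icc 0 y) :=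
      hU.1.mono (Icc_subset_Icc (by norm_num) hy.2.le)
    have h1 : ∀ t ∈ Icc (0:ℝ) y, (1:ℝ) + t ≠ 0 := by
      intro t ht; have := ht.1; intro h; linarith
    have h2 : ∀ t ∈ Icc (0:ℝ) y, (1:ℝ) - t^2 ≠ 0 := by
      intro t ht
      have := ht.1; have := lt_of_le_of_lt ht.2 hy.2
      intro h; nlinarith
    exact (continuousOn_const.div (by fun_prop) h1).sub
      (((hUc.div (by fun_prop) h2).pow 2).div_const 2)
  have hfi : IntervalIntegrable f MeasureTheory.volume 0 y := by
    have h := hfc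
    rw [← uIcc_of_le hy.1] at h
    exact h.intervalIntegrable
  have hF0 : Faux c₃ U 0 = γ := by simp [Faux, hU.2.2.2]
  have hFTC : ∫ t in (0:ℝ)..y, f t = Faux c₃ U y - γ := by
    rw [← hF0]
    apply intervalIntegral.integral_eq_sub_of_hasDerivAt _ hfi
    intro t ht
    rw [uIcc_of_le hy.1] at ht
    exact F_hasDeriv hU (hsub ht)
  have hptw : ∀ t ∈ Icc (0:ℝ) y,
      |f t| ≤ (ε + 9*ε^2) + ε^2/4 * (Real.log (1 - t))^2 := by
    intro t ht
    have ht1 : (0:ℝ) ≤ t := ht.1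
    have ht2 : t < 1 := lt_of_le_of_lt ht.2 hy.2
    have h1t : (0:ℝ) < 1 - t^2 := by nlinarith
    have hA : |c₃ / (1+t)| ≤ ε := by
      rw [abs_div, abs_of_pos (by linarith : (0:ℝ) < 1+t)]
      have h := div_le_self (abs_nonneg c₃) (by linarith : (1:ℝ) ≤ 1+t)
      linarith
    have hm : (0:ℝ) ≤ -Real.log (1 - t) := by
      have := Real.log_nonpos (by linarith : (0:ℝ) ≤ 1 - t) (by linarith : (1:ℝ) - t ≤ 1)
      linarith
    have hlogid : |Real.log (1 - t^2)| ≤ -Real.log (1 - t) := by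
      have hlt : Real.log (1 - t^2) ≤ 0 :=
        Real.log_nonpos (by linarith) (by nlinarith)
      rw [abs_of_nonpos hlt]
      have hsplit : Real.log (1 - t^2) = Real.log (1-t) + Real.log (1+t) := by
        rw [← Real.log_mul (by linarith) (by linarith)]
        ring_nf
      have hp : 0 ≤ Real.log (1+t) := Real.log_nonneg (by linarith)
      linarith
    have hV : |U t / (1 - t^2)| ≤ 3*ε + ε/2 * (-Real.log (1 - t)) := by
      have hFt := hb t ht
      have hident : U t / (1 - t^2) = Faux c₃ U t - c₃/2 * Real.log (1 - t^2) := by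
        simp [Faux]
      rw [hident]
      have h2 : |c₃/2 * Real.log (1 - t^2)| ≤ ε/2 * (-Real.log (1 - t)) := by
        rw [abs_mul]
        have : |c₃/2| ≤ ε/2 := by rw [abs_div]; simp; linarith [hc3]
        nlinarith [abs_nonneg (Real.log (1 - t^2)), abs_nonneg (c₃/2)]
      calc |Faux c₃ U t - c₃/2 * Real.log (1 - t^2)|
          ≤ |Faux c₃ U t| + |c₃/2 * Real.log (1 - t^2)| := abs_sub _ _
        _ ≤ 3*ε + ε/2 * (-Real.log (1 - t)) := by linarith
    have hsq : (U t / (1-t^2))^2 / 2 ≤ 9*ε^2 + ε^2/4 * (Real.log (1-t))^2 := by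
      have hx := mul_self_le_mul_self (abs_nonneg (U t / (1-t^2))) hV
      have hsa : |U t / (1-t^2)| * |U t / (1-t^2)| = (U t / (1-t^2))^2 := by
        rw [← abs_mul, abs_mul_self]; ring
      nlinarith [sq_nonneg (3*ε - ε/2 * (-Real.log (1-t))), sq_nonneg (Real.log (1-t))]
    calc |f t| ≤ |c₃/(1+t)| + |(U t / (1-t^2))^2 / 2| := abs_sub _ _
      _ ≤ ε + ((U t / (1-t^2))^2 / 2) := by
          rw [abs_of_nonneg (by positivity : (0:ℝ) ≤ (U t / (1-t^2))^2 / 2)]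
          linarith
      _ ≤ (ε + 9*ε^2) + ε^2/4 * (Real.log (1 - t))^2 := by linarith
  have hgint : IntervalIntegrable
      (fun t => (ε + 9*ε^2) + ε^2/4 * (Real.log (1 - t))^2) MeasureTheory.volume 0 y :=
    intervalIntegrable_const.add ((logsq_intInt hy).const_mul _)
  have habs : |∫ t in (0:ℝ)..y, f t| ≤ ∫ t in (0:ℝ)..y, |f t| :=
    intervalIntegral.abs_integral_le_integral_abs hy.1
  have hmono : ∫ t in (0:ℝ)..y, |f t|
      ≤ ∫ t in (0:ℝ)..y, ((ε + 9*ε^2) + ε^2/4 * (Real.log (1 - t))^2) := by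
    apply intervalIntegral.integral_mono_on hy.1 hfi.abs hgint
    exact hptw
  have hgval : ∫ t in (0:ℝ)..y, ((ε + 9*ε^2) + ε^2/4 * (Real.log (1 - t))^2)
      = (ε + 9*ε^2) * y + ε^2/4 * ∫ t in (0:ℝ)..y, (Real.log (1 - t))^2 := by
    rw [intervalIntegral.integral_add intervalIntegrable_const
      ((logsq_intInt hy).const_mul _), intervalIntegral.integral_const,
      intervalIntegral.integral_const_mul]
    simp [mul_comm]
  have hlog2 := logsq_integral_le hy
  have hIbound : |∫ t in (0:ℝ)..y, f t| ≤ ε + 9*ε^2 + ε^2/2 := by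
    have hy1 : y ≤ 1 := hy.2.le
    have h19 : (ε + 9*ε^2) * y ≤ ε + 9*ε^2 := by nlinarith
    have hkey : (∫ t in (0:ℝ)..y, |f t|)
        ≤ (ε + 9*ε^2) * y + ε^2/4 * ∫ t in (0:ℝ)..y, (Real.log (1 - t))^2 := by
      rw [hgval] at hmono; exact hmono
    nlinarith [habs, hkey, hlog2, sq_nonneg ε]
  have : Faux c₃ U y = γ + ∫ t in (0:ℝ)..y, f t := by linarith [hFTC]
  rw [this]
  calc |γ + ∫ t in (0:ℝ)..y, f t| ≤ |γ| + |∫ t in (0:ℝ)..y, f t| := abs_add_le _ _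
    _ ≤ ε + (ε + 9*ε^2 + ε^2/2) := by linarith
    _ ≤ 5/2 * ε := by nlinarith

lemma Faux_zero {c₃ γ : ℝ} {U : ℝ → ℝ} (hU : SolvesProfileODE c₃ γ U) :
    Faux c₃ U 0 = γ := by simp [Faux, hU.2.2.2]

lemma core {c₃ γ : ℝ} {U : ℝ → ℝ} (hU : SolvesProfileODE c₃ γ U)
    (hμ : |c₃| + |γ| ≤ 1/19) (hpos : 0 < |c₃| + |γ|) :
    ∀ y ∈ Ico (0:ℝ) 1, |Faux c₃ U y| ≤ 3 * (|c₃| + |γ|) := by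
  set ε := |c₃| + |γ| with hεdef
  intro y₀ hy₀
  set s : Set ℝ := {t | ∀ u ∈ Icc (0:ℝ) t, |Faux c₃ U u| ≤ 3 * ε} with hsdef
  have hcontF : ∀ t ∈ Ioo (-1:ℝ) 1, ContinuousAt (Faux c₃ U) t :=
    fun t ht => (F_hasDeriv hU ht).continuousAt
  have hsubset : Icc (0:ℝ) y₀ ⊆ Ioo (-1:ℝ) 1 :=
    fun t ht => ⟨by linarith [ht.1], lt_of_le_of_lt ht.2 hy₀.2⟩
  have h0s : 0 ∈ s := by
    intro u hu
    have hu0 : u = 0 := le_antisymm hu.2 hu.1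
    rw [hu0, Faux_zero hU]
    have : |γ| ≤ ε := le_add_of_nonneg_left (abs_nonneg c₃)
    linarith
  have hclosed : IsClosed (s ∩ Icc 0 y₀) := by
    apply IsSeqClosed.isClosed
    intro x p hx hxp
    have hp : p ∈ Icc (0:ℝ) y₀ :=
      isClosed_Icc.isSeqClosed (fun n => (hx n).2) hxp
    refine ⟨?_, hp⟩
    intro u hu
    rcases eq_or_lt_of_le hu.2 with heq | hlt
    · have hFc : ContinuousAt (Faux c₃ U) p := hcontF p (hsubset hp)
      have htend : Filter.Tendsto (fun n => |Faux c₃ U (x n)|) Filter.atTop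
          (nhds |Faux c₃ U p|) := (hFc.tendsto.comp hxp).abs
      rw [heq]
      apply le_of_tendsto htend
      filter_upwards with n
      exact (hx n).1 (x n) ⟨(hx n).2.1, le_refl _⟩
    · obtain ⟨n, hn⟩ := (hxp.eventually (eventually_gt_nhds hlt)).exists
      exact (hx n).1 u ⟨hu.1, hn.le⟩
  have hgt : ∀ x ∈ s ∩ Ico 0 y₀, s ∈ nhdsWithin x (Ioi x) := by
    rintro x ⟨hxs, hx0, hxy⟩
    have hxIco : x ∈ Ico (0:ℝ) 1 := ⟨hx0, lt_trans hxy hy₀.2⟩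
    have himp : |Faux c₃ U x| ≤ 5/2*ε := improvement hU hμ hxIco hxs
    have hFc : ContinuousAt (Faux c₃ U) x := hcontF x (hsubset ⟨hx0, hxy.le⟩)
    have h1 : |Faux c₃ U x| < 3*ε := by linarith
    have hev : ∀ᶠ u in nhds x, |Faux c₃ U u| < 3*ε :=
      hFc.abs.preimage_mem_nhds (Iio_mem_nhds h1)
    rw [Metric.eventually_nhds_iff] at hev
    obtain ⟨δ, hδ, hδp⟩ := hev
    have hIoo : Ioo x (x+δ) ∈ nhdsWithin x (Ioi x) :=
      Ioo_mem_nhdsGT_of_mem ⟨le_refl x, by linarith⟩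
    apply Filter.mem_of_superset hIoo
    rintro t ⟨hxt, htδ⟩ u hu
    rcases le_or_gt u x with h | h
    · exact hxs u ⟨hu.1, h⟩
    · have hd : dist u x < δ := by
        rw [Real.dist_eq, abs_of_pos (by linarith)]
        linarith [hu.2]
      exact (hδp hd).le
  have hsub := hclosed.Icc_subset_of_forall_mem_nhdsWithin h0s hgt
  exact (hsub ⟨hy₀.1, le_refl y₀⟩) y₀ ⟨hy₀.1, le_refl y₀⟩

lemma key_half {c₃ γ : ℝ} {U : ℝ → ℝ} (hU : SolvesProfileODE c₃ γ U)
    (hμ : |c₃| + |γ| ≤ 1/19) (hpos : 0 < |c₃| + |γ|) :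
    ∀ x ∈ Ico (0:ℝ) 1,
      |U x + c₃/2 * ((1 - x^2) * Real.log (1 - x^2))| ≤ 3 * (|c₃| + |γ|) * (1 - x^2) := by
  intro x hx
  have h := core hU hμ hpos x hx
  have h1x : (0:ℝ) < 1 - x^2 := by nlinarith [hx.1, hx.2]
  have hid : U x + c₃/2 * ((1 - x^2) * Real.log (1 - x^2)) = (1 - x^2) * Faux c₃ U x := by
    simp only [Faux]
    field_simp
  rw [hid, abs_mul, abs_of_pos h1x]
  calc (1 - x^2) * |Faux c₃ U x| ≤ (1 - x^2) * (3 * (|c₃| + |γ|)) :=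
        mul_le_mul_of_nonneg_left h h1x.le
    _ = 3 * (|c₃| + |γ|) * (1 - x^2) := by ring

lemma neg_solves {c₃ γ : ℝ} {U : ℝ → ℝ} (hU : SolvesProfileODE c₃ γ U) :
    SolvesProfileODE c₃ (-γ) (fun t => -U (-t)) := by
  obtain ⟨hc, hd, hode, h0⟩ := hU
  refine ⟨?_, ?_, ?_, ?_⟩
  · have hmap : MapsTo (fun t : ℝ => -t) (Icc (-1:ℝ) 1) (Icc (-1:ℝ) 1) := by
      intro t ht
      have h2 : -t ∈ Icc (-1:ℝ) 1 := by
        simp only [mem_Icc] at ht ⊢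
        constructor <;> linarith [ht.1, ht.2]
      simpa using h2
    exact (hc.comp (continuous_neg.continuousOn) hmap).neg
  · have hmap : MapsTo (fun t : ℝ => -t) (Ioo (-1:ℝ) 1) (Ioo (-1:ℝ) 1) := by
      intro t ht
      have h2 : -t ∈ Ioo (-1:ℝ) 1 := by
        simp only [mem_Ioo] at ht ⊢
        constructor <;> linarith [ht.1, ht.2]
      simpa using h2
    exact (hd.comp (contDiff_neg.contDiffOn) hmap).neg
  · intro y hy
    have hny : -y ∈ Ioo (-1:ℝ) 1 := ⟨by linarith [hy.2], by linarith [hy.1]⟩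
    have hUd : HasDerivAt U (deriv U (-y)) (-y) := by
      have hdd : DifferentiableAt ℝ U (-y) :=
        (hd.differentiableOn (by norm_num)).differentiableAt (isOpen_Ioo.mem_nhds hny)
      exact hdd.hasDerivAt
    have hW : HasDerivAt (fun t : ℝ => -U (-t)) (deriv U (-y)) y := by
      have h1 : HasDerivAt (fun t : ℝ => U (-t)) (deriv U (-y) * (-1)) y :=
        hUd.comp y (hasDerivAt_neg y)
      exact h1.neg.congr_deriv (by ring)
    rw [hW.deriv]
    have heq := hode (-y) hny
    linear_combination heq
  · show -U (-0) = -γ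
    rw [neg_zero, h0]

/-- Leading-order asymptotics of the profile `U` (Lemma 2.1, estimate (2.2)). -/
theorem stmt5 (M : ℝ) (hM : 0 < M) :
    ∃ μ > 0, ∃ C > 0, ∀ c₃ γ : ℝ, |c₃| + |γ| ≤ μ →
      ∀ U : ℝ → ℝ, SolvesProfileODE c₃ γ U →
        (∀ y ∈ Ioo (-1 : ℝ) 1, |U y| ≤ M * (|c₃| + |γ|)) →
        ∀ y ∈ Ioo (-1 : ℝ) 1,
          |U y + (c₃ / 2) * Real.sign y * (1 - y ^ 2) * Real.log (1 - y ^ 2)|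
            ≤ C * (|c₃| + |γ|) * (1 - y ^ 2) := by
  refine ⟨1/19, by norm_num, 3, by norm_num, ?_⟩
  intro c₃ γ hμ U hU hsup y hy
  rcases eq_or_lt_of_le (show (0:ℝ) ≤ |c₃| + |γ| by positivity) with heq | hpos
  · -- degenerate case ε = 0
    have hc : c₃ = 0 := by
      have h1 := abs_nonneg c₃; have h2 := abs_nonneg γ
      have : |c₃| = 0 := by linarith [heq.symm.le]
      exact abs_eq_zero.mp this
    have hUy : U y = 0 := by
      have h := hsup y hy
      rw [← heq, mul_zero] at h
      exact abs_eq_zero.mp (le_antisymm h (abs_nonneg _))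
    have hγ : γ = 0 := by
      have h1 := abs_nonneg c₃; have h2 := abs_nonneg γ
      have : |γ| = 0 := by linarith [heq.symm.le]
      exact abs_eq_zero.mp this
    rw [hUy, hc, hγ]
    simp
  · rcases lt_trichotomy y 0 with hneg | hzero | hposy
    · -- y < 0 : use the reflected solution
      have hW := neg_solves hU
      have hμ' : |c₃| + |-γ| ≤ 1/19 := by rwa [abs_neg]
      have hpos' : 0 < |c₃| + |-γ| := by rwa [abs_neg]
      have hx : -y ∈ Ico (0:ℝ) 1 := ⟨by linarith, by linarith [hy.1]⟩
      have h := key_half hW hμ' hpos' (-y) hx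
      rw [abs_neg] at h
      have hsq : (-y)^2 = y^2 := by ring
      rw [hsq] at h
      simp only [neg_neg] at h
      have hsign : Real.sign y = -1 := Real.sign_of_neg hneg
      rw [hsign]
      have hgoal : U y + c₃ / 2 * (-1) * (1 - y ^ 2) * Real.log (1 - y ^ 2)
          = -(-U y + c₃/2 * ((1 - y^2) * Real.log (1 - y^2))) := by ring
      rw [hgoal, abs_neg]
      linarith [h]
    · -- y = 0
      subst hzero
      have h := key_half hU hμ hpos 0 ⟨le_refl 0, by norm_num⟩
      simp only [Real.sign_zero, mul_zero, zero_mul, mul_one]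
      simpa using h
    · -- y > 0
      have hx : y ∈ Ico (0:ℝ) 1 := ⟨hposy.le, hy.2⟩
      have h := key_half hU hμ hpos y hx
      have hsign : Real.sign y = 1 := Real.sign_of_pos hposy
      rw [hsign]
      have hgoal : U y + c₃ / 2 * 1 * (1 - y ^ 2) * Real.log (1 - y ^ 2)
          = U y + c₃/2 * ((1 - y^2) * Real.log (1 - y^2)) := by ring
      rw [hgoal]
      exact h
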